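/- arXiv:math/0408272 — 3 statements merged into one kernel-verified Lean document; each statement's English description precedes it below -/
import Mathlib

section
/- For natural numbers m and n with 2 ≤ m ≤ n, the alternating sum ∑_{s=0}^{⌊m/2⌋} (−1)^s · C(n,s) · C(n+m−2−2s, m−2s) equals C(n,m) − C(n,m−1). -/
open Finset PowerSeries

private lemma coeff_one_add_X_pow' (n j : ℕ) (hj : j ≤ n) :
    PowerSeries.coeff j ((1 + X : ℤ⟦X⟧) ^ n) = (n.choose j : ℤ) := by
  rw [add_comm (1 : ℤ⟦X⟧) X, add_pow, map_sum]
  rw [Finset.sum_eq_single j]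
  · rw [one_pow, mul_one, show ((n.choose j : ℤ⟦X⟧)) = C (n.choose j : ℤ) by
      simp, mul_comm, coeff_C_mul, coeff_X_pow, if_pos rfl, mul_one]
  · intro k _ hkj
    rw [one_pow, mul_one, show ((n.choose k : ℤ⟦X⟧)) = C (n.choose k : ℤ) by
      simp, mul_comm, coeff_C_mul, coeff_X_pow, if_neg (Ne.symm hkj), mul_zero]
  · intro h
    exact absurd (Finset.mem_range.2 (Nat.lt_succ_of_le hj)) h

/-- I_{m,n}(n) = C(n,m) − C(n,m−1): fully resonant case. -/
theorem alternating_sum_full_resonance (m n : ℕ) (hm : 2 ≤ m) (hmn : m ≤ n) :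
    ∑ s ∈ Finset.range (m / 2 + 1),
        (-1 : ℤ) ^ s * (Nat.choose n s : ℤ) * (Nat.choose (n + m - 2 - 2 * s) (m - 2 * s) : ℤ)
      = (Nat.choose n m : ℤ) - (Nat.choose n (m - 1) : ℤ) := by
  have hn2 : 2 ≤ n := hm.trans hmn
  set B : ℤ⟦X⟧ := (invOneSubPow ℤ (n - 1)).val with hB
  have hcoeffB : ∀ k, PowerSeries.coeff k B = ((n - 2 + k).choose (n - 2) : ℤ) := by
    intro k
    rw [hB, show n - 1 = (n - 2) + 1 by omega, invOneSubPow_val_succ_eq_mk_add_choose,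
      coeff_mk]
  have key : ((1 - X ^ 2 : ℤ⟦X⟧) ^ n) * B = (1 + X) ^ n * (1 - X) := by
    have h2 : ((1 - X : ℤ⟦X⟧) ^ (n - 1)) * B = 1 := by
      rw [hB, ← invOneSubPow_inv_eq_one_sub_pow]
      exact (invOneSubPow ℤ (n - 1)).inv_val
    have h1 : ((1 - X ^ 2 : ℤ⟦X⟧) ^ n) = (1 + X) ^ n * (1 - X) * (1 - X) ^ (n - 1) := by
      have hn1 : (1 - X : ℤ⟦X⟧) * (1 - X) ^ (n - 1) = (1 - X) ^ n := by
        rw [← pow_succ']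
        congr 1
        omega
      rw [mul_assoc, hn1, ← mul_pow]
      congr 1
      ring
    calc ((1 - X ^ 2 : ℤ⟦X⟧) ^ n) * B
        = (1 + X) ^ n * (1 - X) * ((1 - X) ^ (n - 1) * B) := by rw [h1]; ring
      _ = (1 + X) ^ n * (1 - X) := by rw [h2, mul_one]
  have expand : ((1 - X ^ 2 : ℤ⟦X⟧) ^ n)
      = ∑ k ∈ range (n + 1), (C ((-1) ^ k * (n.choose k : ℤ))) * X ^ (2 * k) := by
    rw [show (1 - X ^ 2 : ℤ⟦X⟧) = (-X ^ 2) + 1 by ring, add_pow]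
    refine Finset.sum_congr rfl fun k _ => ?_
    rw [one_pow, mul_one, neg_pow, ← pow_mul]
    rw [map_mul, map_pow, map_neg, map_one, map_natCast]
    ring
  have hL : PowerSeries.coeff m (((1 - X ^ 2 : ℤ⟦X⟧) ^ n) * B)
      = ∑ s ∈ range (m / 2 + 1),
          (-1 : ℤ) ^ s * (n.choose s : ℤ) * ((n + m - 2 - 2 * s).choose (m - 2 * s) : ℤ) := by
    rw [expand, Finset.sum_mul, map_sum]
    have step : ∀ k ∈ range (n + 1),
        PowerSeries.coeff m ((C ((-1) ^ k * (n.choose k : ℤ))) * X ^ (2 * k) * B)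
          = if 2 * k ≤ m then
              (-1 : ℤ) ^ k * (n.choose k : ℤ) * ((n + m - 2 - 2 * k).choose (m - 2 * k) : ℤ)
            else 0 := by
      intro k _
      rw [mul_assoc, coeff_C_mul, coeff_X_pow_mul', hcoeffB]
      split_ifs with h
      · have e1 : n - 2 + (m - 2 * k) = n + m - 2 - 2 * k := by omega
        have e3 : (n - 2 + (m - 2 * k)).choose (n - 2)
            = (n + m - 2 - 2 * k).choose (m - 2 * k) := by
          rw [e1, show n - 2 = (n + m - 2 - 2 * k) - (m - 2 * k) by omega]
          exact Nat.choose_symm (by omega)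
        rw [e3]
      · rw [mul_zero]
    rw [Finset.sum_congr rfl step, Finset.sum_ite, Finset.sum_const_zero, add_zero]
    apply Finset.sum_congr
    · ext k
      simp only [Finset.mem_filter, Finset.mem_range]
      omega
    · intro k _
      rfl
  have hR : PowerSeries.coeff m ((1 + X : ℤ⟦X⟧) ^ n * (1 - X))
      = (n.choose m : ℤ) - (n.choose (m - 1) : ℤ) := by
    have h3 : ((1 + X : ℤ⟦X⟧) ^ n * (1 - X)) = (1 + X) ^ n - (1 + X) ^ n * X := by ring
    have hx : PowerSeries.coeff m ((1 + X : ℤ⟦X⟧) ^ n * X) = (n.choose (m - 1) : ℤ) := by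
      rw [show m = (m - 1) + 1 by omega, coeff_succ_mul_X,
        coeff_one_add_X_pow' n (m - 1) (by omega)]
      simp
    rw [h3, map_sub, coeff_one_add_X_pow' n m hmn, hx]
  rw [← hL, key, hR]
end

section
/- For natural numbers m and n with 2 ≤ m ≤ n−1, the alternating sum ∑_{s=0}^{⌊m/2⌋} (−1)^s · C(n−1,s) · C(n+m−2−2s, m−2s) equals C(n−1, m). -/
open PowerSeries Finset

lemma coeff_one_add_X_pow (N k : ℕ) :
    (PowerSeries.coeff k) ((1 + X)^N : ℤ⟦X⟧) = N.choose k := by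
  rw [add_comm, add_pow]
  simp only [one_pow, mul_one, map_sum]
  have h : ∀ x ∈ range (N+1), (coeff k) (X^x * ((N.choose x : ℕ) : ℤ⟦X⟧))
      = if k = x then ((N.choose x : ℕ) : ℤ) else 0 := by
    intro x _
    rw [mul_comm, ← map_natCast (C (R := ℤ)), coeff_C_mul, coeff_X_pow]
    split <;> simp
  rw [Finset.sum_congr rfl h, Finset.sum_ite_eq (range (N+1)) k]
  split
  · rfl
  · rename_i hk
    rw [Nat.choose_eq_zero_of_lt (by simpa using hk)]
    simp

lemma coeff_one_sub_X_sq_pow (N k : ℕ) :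
    (PowerSeries.coeff k) ((1 - X^2)^N : ℤ⟦X⟧)
      = if 2 ∣ k then (-1 : ℤ)^(k/2) * N.choose (k/2) else 0 := by
  have h1 : (1 - X^2 : ℤ⟦X⟧) = (X^2) * (-1) + 1 := by ring
  rw [h1, add_pow]
  simp only [one_pow, mul_one, map_sum]
  have h : ∀ x ∈ range (N+1),
      (coeff k) ((X^2 * (-1 : ℤ⟦X⟧))^x * ((N.choose x : ℕ) : ℤ⟦X⟧))
      = if k = 2*x then (-1 : ℤ)^x * ((N.choose x : ℕ) : ℤ) else 0 := by
    intro x _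
    have h2 : (X^2 * (-1 : ℤ⟦X⟧))^x * ((N.choose x : ℕ) : ℤ⟦X⟧)
        = C ((-1 : ℤ)^x * N.choose x) * X^(2*x) := by
      rw [map_mul, map_pow, map_natCast, map_neg, map_one, mul_pow, ← pow_mul]
      ring
    rw [h2, coeff_C_mul, coeff_X_pow]
    split <;> ring
  rw [Finset.sum_congr rfl h]
  by_cases hd : 2 ∣ k
  · obtain ⟨t, rfl⟩ := hd
    have h3 : ∀ x ∈ range (N+1), (if 2*t = 2*x then (-1 : ℤ)^x * ((N.choose x : ℕ) : ℤ) else 0)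
        = if t = x then (-1 : ℤ)^x * ((N.choose x : ℕ) : ℤ) else 0 := by
      intro x _; congr 1; simp only [eq_iff_iff]; omega
    rw [Finset.sum_congr rfl h3, Finset.sum_ite_eq (range (N+1)) t]
    have ht2 : 2 * t / 2 = t := by omega
    rw [ht2]
    split
    · simp
    · rename_i hk
      rw [Nat.choose_eq_zero_of_lt (by simpa using hk)]
      simp
  · rw [if_neg hd, Finset.sum_eq_zero]
    intro x _
    rw [if_neg (by rintro rfl; exact hd ⟨x, rfl⟩)]

lemma key (N m : ℕ) (hN : 0 < N) :
    ∑ s ∈ Finset.range (m / 2 + 1),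
        (-1 : ℤ) ^ s * (N.choose s : ℤ) * (((N - 1 + (m - 2*s)).choose (m - 2*s) : ℕ) : ℤ)
      = (N.choose m : ℤ) := by
  have hu : ((1 + X : ℤ⟦X⟧))^N = (1 - X^2)^N * (invOneSubPow ℤ N).val := by
    have h1 : (1 - X^2 : ℤ⟦X⟧)^N = (1+X)^N * (1-X)^N := by
      rw [← mul_pow]; ring_nf
    rw [h1, mul_assoc, ← invOneSubPow_inv_eq_one_sub_pow, (invOneSubPow ℤ N).inv_val, mul_one]
  have h2 := congrArg (PowerSeries.coeff m) hu
  rw [coeff_one_add_X_pow, PowerSeries.coeff_mul] at h2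
  rw [Finset.Nat.sum_antidiagonal_eq_sum_range_succ_mk] at h2
  rw [invOneSubPow_val_eq_mk_sub_one_add_choose_of_pos _ _ hN] at h2
  simp only [coeff_mk, coeff_one_sub_X_sq_pow] at h2
  set g : ℕ → ℤ := fun i =>
    (if 2 ∣ i then (-1 : ℤ)^(i/2) * N.choose (i/2) else 0) * (((N - 1 + (m - i)).choose (N-1) : ℕ) : ℤ) with hg
  have h3 : (N.choose m : ℤ) = ∑ i ∈ range (m+1), g i := h2
  have hinj : ∀ x ∈ range (m/2+1), ∀ y ∈ range (m/2+1), 2*x = 2*y → x = y := by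
    intros; omega
  have himg : ∑ s ∈ range (m/2+1), g (2*s) = ∑ i ∈ (range (m/2+1)).image (2*·), g i :=
    (Finset.sum_image hinj).symm
  have hsub : (range (m/2+1)).image (2*·) ⊆ range (m+1) := by
    intro i hi
    simp only [Finset.mem_image, Finset.mem_range] at *
    omega
  have hzero : ∀ i ∈ range (m+1), i ∉ (range (m/2+1)).image (2*·) → g i = 0 := by
    intro i hi hni
    simp only [Finset.mem_image, Finset.mem_range] at hi hni
    have : ¬ 2 ∣ i := by
      rintro ⟨t, rfl⟩
      exact hni ⟨t, by omega, by omega⟩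
    rw [hg]
    simp [this]
  have h4 : ∑ i ∈ range (m+1), g i = ∑ s ∈ range (m/2+1), g (2*s) := by
    rw [himg]
    exact (Finset.sum_subset hsub hzero).symm
  rw [h3, h4]
  refine Finset.sum_congr rfl fun s _ => ?_
  rw [hg]
  simp only [Nat.mul_div_cancel_left _ (by norm_num : 0 < 2)]
  rw [if_pos (dvd_mul_right 2 s), Nat.choose_symm_add]

/-- I_{m,n}(n−1) = C(n−1,m): case of n−1 resonant exponents. -/
theorem alternating_sum_almost_full_resonance (m n : ℕ) (hm : 2 ≤ m) (hmn : m ≤ n - 1) :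
    ∑ s ∈ Finset.range (m / 2 + 1),
        (-1 : ℤ) ^ s * (Nat.choose (n - 1) s : ℤ)
          * (Nat.choose (n + m - 2 - 2 * s) (m - 2 * s) : ℤ)
      = (Nat.choose (n - 1) m : ℤ) := by
  have hN : 0 < n - 1 := by omega
  rw [← key (n-1) m hN]
  refine Finset.sum_congr rfl fun s hs => ?_
  simp only [Finset.mem_range] at hs
  congr 3
  omega
end

section
/- (Pfaff–Saalschütz) Let j be a natural number and let a, b, c be real numbers such that (c)_j ≠ 0 and (1+a+b−c−j)_k ≠ 0 for all 0 ≤ k ≤ j. Then ∑_{k=0}^{j} [(a)_k (b)_k (−j)_k] / [(c)_k (1+a+b−c−j)_k · k!] = (c−a)_j (c−b)_j / [(c)_j (c−a−b)_j], provided also (c−a−b)_j ≠ 0. -/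
set_option maxHeartbeats 1600000

/-- Rising factorial (Pochhammer symbol) on ℝ. -/
def poch (x : ℝ) : ℕ → ℝ
  | 0 => 1
  | k + 1 => poch x k * (x + k)

lemma poch_zero (x : ℝ) : poch x 0 = 1 := rfl

lemma poch_succ (x : ℝ) (k : ℕ) : poch x (k + 1) = poch x k * (x + k) := rfl

lemma poch_add (x : ℝ) (m l : ℕ) : poch x (m + l) = poch x m * poch (x + m) l := by
  induction l with
  | zero => simp [poch]
  | succ l ih =>
      rw [← Nat.add_assoc, poch_succ, ih, poch_succ]
      push_cast
      ring

lemma poch_succ_left (x : ℝ) (k : ℕ) : poch x (k + 1) = x * poch (x + 1) k := by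
  rw [Nat.add_comm k 1, poch_add]
  norm_num [poch]

lemma poch_ne_zero_of_le {x : ℝ} {j : ℕ} (h : poch x j ≠ 0) {k : ℕ} (hk : k ≤ j) :
    poch x k ≠ 0 := by
  obtain ⟨l, rfl⟩ := Nat.exists_eq_add_of_le hk
  rw [poch_add] at h
  exact left_ne_zero_of_mul h

lemma factor_ne_zero {x : ℝ} {j k : ℕ} (h : poch x j ≠ 0) (hk : k < j) :
    x + k ≠ 0 := by
  have h1 : poch x (k + 1) ≠ 0 := poch_ne_zero_of_le h hk
  rw [poch_succ] at h1
  exact right_ne_zero_of_mul h1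

lemma poch_neg_nat (n : ℕ) : poch (-(n : ℝ)) (n + 1) = 0 := by
  rw [poch_succ]
  simp

set_option maxHeartbeats 1600000 in
lemma cert (A B C D M Fk a c d n k : ℝ)
    (hC : C ≠ 0) (hD : D ≠ 0) (hF : Fk ≠ 0) (hck : c + k ≠ 0)
    (hdk : d + k ≠ 0) (hcn : c + n ≠ 0) (hn1 : n + 1 ≠ 0)
    (hd0 : d ≠ 0) (hk1 : k + 1 ≠ 0) :
    A * B * M / (C * D * Fk)
      = ((c - a + n) * (a - d) / ((c + n) * -d))
          * (A * B * (M * (-(n + 1) + k) / (-(n + 1)))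
              / (C * (D * (d + k) / d) * Fk))
        + (-((k + 1) * ((k + 1) + c - 1))
            * (A * (a + k) * (B * ((c + n + d - a) + k)) * (M * (-(n + 1) + k)))
            / ((c + n) * (n + 1) * (C * (c + k) * (D * (d + k))
                * ((k + 1) * Fk)))
          - -(k * (k + c - 1)) * (A * B * M)
              / ((c + n) * (n + 1) * (C * D * Fk))) := by
  have hn1' : -(n + 1) ≠ 0 := neg_ne_zero.mpr hn1
  have hd' : -d ≠ 0 := neg_ne_zero.mpr hd0
  have e : C * (D * (d + k) / d) * Fk = C * (D * (d + k)) * Fk / d := by ring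
  have hx : (-1 : ℝ) + -n ≠ 0 := by intro h; exact hn1 (by linarith)
  rw [e, div_div_eq_mul_div]
  field_simp
  ring

lemma pfaff_aux : ∀ (j : ℕ) (a b c : ℝ),
    poch c j ≠ 0 →
    (∀ k ≤ j, poch (1 + a + b - c - (j : ℝ)) k ≠ 0) →
    poch (c - a - b) j ≠ 0 →
    ∑ k ∈ Finset.range (j + 1),
        poch a k * poch b k * poch (-(j : ℝ)) k
          / (poch c k * poch (1 + a + b - c - (j : ℝ)) k * (Nat.factorial k : ℝ))
      = poch (c - a) j * poch (c - b) j / (poch c j * poch (c - a - b) j) := by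
  intro j
  induction j with
  | zero =>
      intro a b c _ _ _
      norm_num [poch]
  | succ n ih =>
      intro a b c hc hd hcab
      have hn1 : ((n : ℝ) + 1) ≠ 0 := by positivity
      have hn1' : -((n : ℝ) + 1) ≠ 0 := neg_ne_zero.mpr hn1
      have hcn : c + (n : ℝ) ≠ 0 := factor_ne_zero hc (Nat.lt_succ_self n)
      have hcabn : c - a - b + (n : ℝ) ≠ 0 := factor_ne_zero hcab (Nat.lt_succ_self n)
      have hc' : poch c n ≠ 0 := poch_ne_zero_of_le hc (Nat.le_succ n)
      have hcab' : poch (c - a - b) n ≠ 0 := poch_ne_zero_of_le hcab (Nat.le_succ n)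
      set d : ℝ := 1 + a + b - c - ((n : ℝ) + 1) with hd_def
      have hcast : ((n + 1 : ℕ) : ℝ) = (n : ℝ) + 1 := by push_cast; ring
      have hdj : ∀ k ≤ n + 1, poch d k ≠ 0 := by
        intro k hk
        have := hd k hk
        rwa [hcast] at this
      clear_value d
      have hd0 : d ≠ 0 := by
        have := hdj 1 (by omega)
        simpa [poch] using this
      have hd1eq : (1 : ℝ) + a + b - c - (n : ℝ) = d + 1 := by rw [hd_def]; ring
      have hd1 : ∀ k ≤ n, poch (1 + a + b - c - (n : ℝ)) k ≠ 0 := by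
        intro k hk
        rw [hd1eq]
        intro h0
        have h1 : poch d (k + 1) = 0 := by
          rw [poch_succ_left, h0, mul_zero]
        exact hdj (k + 1) (by omega) h1
      have hIH := ih a b c hc' hd1 hcab'
      set G : ℕ → ℝ := fun k =>
        -((k : ℝ) * ((k : ℝ) + c - 1)) * (poch a k * poch b k * poch (-((n : ℝ) + 1)) k)
          / ((c + (n : ℝ)) * ((n : ℝ) + 1) * (poch c k * poch d k * (Nat.factorial k : ℝ)))
        with hG_def
      clear_value G
      set ratio : ℝ := (c - a + n) * (c - b + n) / ((c + n) * (c - a - b + n)) with hratio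
      clear_value ratio
      have key : ∀ k ∈ Finset.range (n + 2),
          poch a k * poch b k * poch (-((n + 1 : ℕ) : ℝ)) k
            / (poch c k * poch (1 + a + b - c - ((n + 1 : ℕ) : ℝ)) k * (Nat.factorial k : ℝ))
          = ratio * (poch a k * poch b k * poch (-(n : ℝ)) k
              / (poch c k * poch (1 + a + b - c - (n : ℝ)) k * (Nat.factorial k : ℝ)))
            + (G (k + 1) - G k) := by
        intro k hk
        rw [Finset.mem_range] at hk
        have hk' : k ≤ n + 1 := by omega
        have hpc : poch c k ≠ 0 := poch_ne_zero_of_le hc hk'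
        have hpd : poch d k ≠ 0 := hdj k hk'
        have hfk : (Nat.factorial k : ℝ) ≠ 0 := Nat.cast_ne_zero.mpr (Nat.factorial_ne_zero k)
        rw [hcast, ← hd_def, hd1eq]
        rcases Nat.lt_or_ge k (n + 1) with hkn | hkn
        · -- generic case k ≤ n
          have hpck : c + (k : ℝ) ≠ 0 := factor_ne_zero hc hkn
          have hpdk : d + (k : ℝ) ≠ 0 :=
            factor_ne_zero (hdj (k + 1) (by omega)) (Nat.lt_succ_self k)
          have hpm : poch (-((n : ℝ) + 1)) k * (-((n : ℝ) + 1) + k)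
              = -((n : ℝ) + 1) * poch (-(n : ℝ)) k := by
            have h2 : poch (-((n : ℝ) + 1)) (k + 1)
                = -((n : ℝ) + 1) * poch (-((n : ℝ) + 1) + 1) k := poch_succ_left _ _
            have h3 : -((n : ℝ) + 1) + 1 = -(n : ℝ) := by ring
            rw [h3] at h2
            rw [← poch_succ, h2]
          have hpmE : poch (-(n : ℝ)) k
              = poch (-((n : ℝ) + 1)) k * (-((n : ℝ) + 1) + (k : ℝ)) / (-((n : ℝ) + 1)) := by
            rw [eq_div_iff hn1']
            linarith [hpm]
          have hpd1E : poch (d + 1) k = poch d k * (d + (k : ℝ)) / d := by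
            have h2 : poch d (k + 1) = d * poch (d + 1) k := poch_succ_left _ _
            rw [poch_succ] at h2
            rw [eq_div_iff hd0]
            linarith [h2]
          have hGk1 : G (k + 1) =
              -(((k : ℝ) + 1) * (((k : ℝ) + 1) + c - 1))
                * (poch a k * (a + k) * (poch b k * (b + k))
                    * (poch (-((n : ℝ) + 1)) k * (-((n : ℝ) + 1) + k)))
                / ((c + (n : ℝ)) * ((n : ℝ) + 1)
                    * (poch c k * (c + k) * (poch d k * (d + k))
                        * (((k : ℝ) + 1) * (Nat.factorial k : ℝ)))) := by
            rw [hG_def]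
            simp only [poch_succ, Nat.factorial_succ]
            push_cast
            ring
          have hGk : G k =
              -((k : ℝ) * ((k : ℝ) + c - 1)) * (poch a k * poch b k * poch (-((n : ℝ) + 1)) k)
                / ((c + (n : ℝ)) * ((n : ℝ) + 1) * (poch c k * poch d k * (Nat.factorial k : ℝ))) := by
            rw [hG_def]
          have hk1 : (k : ℝ) + 1 ≠ 0 := by positivity
          have r1 : c - b + (n : ℝ) = a - d := by rw [hd_def]; ring
          have r2 : c - a - b + (n : ℝ) = -d := by rw [hd_def]; ring
          have r3 : b + (k : ℝ) = (c + (n : ℝ) + d - a) + (k : ℝ) := by rw [hd_def]; ring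
          rw [hGk1, hGk, hpmE, hpd1E, hratio, r1, r2, r3]
          exact cert (poch a k) (poch b k) (poch c k) (poch d k)
            (poch (-((n : ℝ) + 1)) k) (Nat.factorial k : ℝ) a c d (n : ℝ) (k : ℝ)
            hpc hpd hfk hpck hpdk hcn hn1 hd0 hk1
        · -- boundary case k = n + 1
          have hkeq : k = n + 1 := by omega
          subst hkeq
          have hU0 : poch (-(n : ℝ)) (n + 1) = 0 := poch_neg_nat n
          have hG0 : G (n + 1 + 1) = 0 := by
            rw [hG_def]
            have h0 : poch (-((n : ℝ) + 1)) (n + 1 + 1) = 0 := by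
              have := poch_neg_nat (n + 1)
              rwa [hcast] at this
            simp only [hG_def, h0, mul_zero, zero_mul, neg_zero, zero_div]
          rw [hU0, hG0]
          simp only [mul_zero, zero_mul, zero_div, zero_sub]
          have hGk : G (n + 1) =
              -(((n + 1 : ℕ) : ℝ) * (((n + 1 : ℕ) : ℝ) + c - 1))
                * (poch a (n + 1) * poch b (n + 1) * poch (-((n : ℝ) + 1)) (n + 1))
                / ((c + (n : ℝ)) * ((n : ℝ) + 1)
                    * (poch c (n + 1) * poch d (n + 1) * (Nat.factorial (n + 1) : ℝ))) := by
            rw [hG_def]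
          rw [hGk]
          push_cast
          field_simp
          ring
      rw [Finset.sum_congr rfl key]
      rw [Finset.sum_add_distrib, Finset.sum_range_sub G]
      rw [← Finset.mul_sum]
      have hG0 : G 0 = 0 := by rw [hG_def]; simp
      have hGN : G (n + 2) = 0 := by
        rw [hG_def]
        have h0 : poch (-((n : ℝ) + 1)) (n + 2) = 0 := by
          have := poch_neg_nat (n + 1)
          rwa [hcast] at this
        simp only [hG_def, h0, mul_zero, zero_mul, neg_zero, zero_div]
      rw [hG0, hGN]
      rw [Finset.sum_range_succ]
      have hU0 : poch (-(n : ℝ)) (n + 1) = 0 := poch_neg_nat n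
      rw [hU0]
      simp only [mul_zero, zero_mul, zero_div, add_zero, sub_zero]
      rw [hIH]
      have e1 : poch (c - a) (n + 1) = poch (c - a) n * (c - a + n) := poch_succ _ _
      have e2 : poch (c - b) (n + 1) = poch (c - b) n * (c - b + n) := poch_succ _ _
      have e3 : poch c (n + 1) = poch c n * (c + n) := poch_succ _ _
      have e4 : poch (c - a - b) (n + 1) = poch (c - a - b) n * (c - a - b + n) := poch_succ _ _
      rw [e1, e2, e3, e4, hratio]
      field_simp

/-- Pfaff–Saalschütz theorem for the terminating Saalschützian ₃F₂ at 1. -/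
theorem pfaff_saalschuetz (j : ℕ) (a b c : ℝ)
    (hc : poch c j ≠ 0)
    (hd : ∀ k ≤ j, poch (1 + a + b - c - (j : ℝ)) k ≠ 0)
    (hcab : poch (c - a - b) j ≠ 0) :
    ∑ k ∈ Finset.range (j + 1),
        poch a k * poch b k * poch (-(j : ℝ)) k
          / (poch c k * poch (1 + a + b - c - (j : ℝ)) k * (Nat.factorial k : ℝ))
      = poch (c - a) j * poch (c - b) j / (poch c j * poch (c - a - b) j) := by
  exact pfaff_aux j a b c hc hd hcab
end
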